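/- Let K be a field of characteristic zero, L a field extension of K, V a finite-dimensional L-vector space of dimension d, and let u and v be two commuting semisimple L-linear automorphisms of V such that tr(uⁱ ∘ vʲ) lies in K (i.e. in the image of the algebra map K → L) for all natural numbers i, j, and such that the characteristic polynomial of u equals its minimal polynomial. Then, in a fixed algebraic closure Ω of L, every eigenvalue of v (i.e. every root in Ω of the characteristic polynomial of v) lies in the subfield of Ω generated by the image of K together with the eigenvalues of u (the roots in Ω of the characteristic polynomial of u). -/

import Mathlib

open Polynomial TensorProduct Matrix

section Helpers

theorem eval_charpoly_mat' {n R : Type*} [DecidableEq n] [Fintype n] [CommRing R]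
    (M : Matrix n n R) (ν : R) :
    M.charpoly.eval ν = (ν • (1 : Matrix n n R) - M).det := by
  rw [Matrix.charpoly, ← Polynomial.coe_evalRingHom, RingHom.map_det]
  congr 1
  ext i j
  by_cases h : i = j <;>
    simp [h, Matrix.charmatrix_apply, Matrix.one_apply, Matrix.diagonal_apply]

theorem charpoly_diagonal' {n R : Type*} [DecidableEq n] [Fintype n] [CommRing R] (c : n → R) :
    (Matrix.diagonal c).charpoly = ∏ i, (X - C (c i)) := by
  rw [Matrix.charpoly]
  have : Matrix.charmatrix (Matrix.diagonal c) = Matrix.diagonal fun i => (X : R[X]) - C (c i) := by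
    ext i j
    by_cases h : i = j <;>
      simp [h, Matrix.charmatrix_apply_eq, Matrix.charmatrix_apply_ne, Matrix.diagonal_apply_ne]
  rw [this, Matrix.det_diagonal]

/-- a root of the characteristic polynomial is an eigenvalue -/
theorem hasEigenvalue_of_isRoot_charpoly' {Ω W : Type*} [Field Ω] [AddCommGroup W] [Module Ω W]
    [FiniteDimensional Ω W] (f : Module.End Ω W) (ν : Ω) (h : f.charpoly.IsRoot ν) :
    f.HasEigenvalue ν := by
  classical
  let b := Module.finBasis Ω W
  have hch : (LinearMap.toMatrix b b f).charpoly = f.charpoly := f.charpoly_toMatrix b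
  have hdet : LinearMap.det (ν • (LinearMap.id : W →ₗ[Ω] W) - f) = 0 := by
    rw [← LinearMap.det_toMatrix b]
    have : LinearMap.toMatrix b b (ν • (LinearMap.id : W →ₗ[Ω] W) - f)
        = ν • (1 : Matrix _ _ Ω) - LinearMap.toMatrix b b f := by
      rw [map_sub, _root_.map_smul, LinearMap.toMatrix_id]
    rw [this, ← eval_charpoly_mat', hch]
    exact h
  obtain ⟨w, hw, hw0⟩ := (Submodule.ne_bot_iff _).mp
    (LinearMap.bot_lt_ker_of_det_eq_zero hdet).ne'
  refine Module.End.hasEigenvalue_of_hasEigenvector ⟨?_, hw0⟩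
  rw [Module.End.mem_eigenspace_iff]
  have := LinearMap.mem_ker.mp hw
  simp only [LinearMap.sub_apply, LinearMap.smul_apply, LinearMap.id_apply, sub_eq_zero] at this
  exact this.symm

theorem toMatrix_diag' {Ω W ι : Type*} [Field Ω] [AddCommGroup W] [Module Ω W] [Fintype ι]
    [DecidableEq ι] (b : Module.Basis ι Ω W) (f : Module.End Ω W) (c : ι → Ω)
    (h : ∀ i, f (b i) = c i • b i) :
    LinearMap.toMatrix b b f = Matrix.diagonal c := by
  ext i j
  rw [LinearMap.toMatrix_apply, h j]
  by_cases hij : i = j <;>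
    simp [hij, Module.Basis.repr_self, Matrix.diagonal_apply, Finsupp.single_apply, eq_comm]

theorem trace_diag' {Ω W ι : Type*} [Field Ω] [AddCommGroup W] [Module Ω W] [Module.Finite Ω W]
    [Fintype ι] [DecidableEq ι] (b : Module.Basis ι Ω W) (f : Module.End Ω W) (c : ι → Ω)
    (h : ∀ i, f (b i) = c i • b i) :
    LinearMap.trace Ω W f = ∑ i, c i := by
  rw [LinearMap.trace_eq_matrix_trace Ω b f, toMatrix_diag' b f c h, Matrix.trace_diagonal]

theorem charpoly_diag_basis' {Ω W ι : Type*} [Field Ω] [AddCommGroup W] [Module Ω W]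
    [FiniteDimensional Ω W] [Fintype ι] [DecidableEq ι] (b : Module.Basis ι Ω W) (f : Module.End Ω W)
    (c : ι → Ω) (h : ∀ i, f (b i) = c i • b i) :
    f.charpoly = ∏ i, (X - C (c i)) := by
  rw [← f.charpoly_toMatrix b, toMatrix_diag' b f c h, charpoly_diagonal']

end Helpers

set_option maxHeartbeats 1600000 in
set_option synthInstance.maxHeartbeats 200000 in
/-- Lemma 4.3 of the paper: if `u`, `v` are commuting semisimple automorphisms of a
finite-dimensional `L`-vector space with `tr(uⁱ vʲ) ∈ K` for all `i, j`, and the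
characteristic polynomial of `u` equals its minimal polynomial, then every eigenvalue of `v`
(in an algebraic closure `Ω` of `L`) lies in the subfield generated by `K` and the
eigenvalues of `u`. -/
theorem eigenvalues_mem_subfield_adjoin_eigenvalues
    (K L Ω : Type*) [Field K] [CharZero K] [Field L] [Algebra K L]
    [Field Ω] [Algebra L Ω] [IsAlgClosed Ω] [Algebra K Ω] [IsScalarTower K L Ω]
    (V : Type*) [AddCommGroup V] [Module L V] [FiniteDimensional L V]
    (u v : Module.End L V) (hu : IsUnit u) (hv : IsUnit v)
    (hcomm : Commute u v)
    (hus : u.IsSemisimple) (hvs : v.IsSemisimple)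
    (htr : ∀ i j : ℕ, LinearMap.trace L V (u ^ i * v ^ j) ∈ Set.range (algebraMap K L))
    (hmin : LinearMap.charpoly u = minpoly L u) :
    ∀ μ : Ω, aeval μ (LinearMap.charpoly v) = 0 →
      μ ∈ Subfield.closure
        (Set.range (algebraMap K Ω) ∪ {z : Ω | aeval z (LinearMap.charpoly u) = 0}) := by
  classical
  intro μ hμ
  haveI : CharZero L := charZero_of_injective_algebraMap (algebraMap K L).injective
  set F : Subfield Ω := Subfield.closure
    (Set.range (algebraMap K Ω) ∪ {z : Ω | aeval z (LinearMap.charpoly u) = 0}) with hF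
  set U : Module.End Ω (Ω ⊗[L] V) := LinearMap.baseChange Ω u with hUdef
  set Vv : Module.End Ω (Ω ⊗[L] V) := LinearMap.baseChange Ω v with hVdef
  -- characteristic polynomials after base change
  have hchU : U.charpoly = (LinearMap.charpoly u).map (algebraMap L Ω) :=
    u.charpoly_baseChange Ω
  have hchV : Vv.charpoly = (LinearMap.charpoly v).map (algebraMap L Ω) :=
    v.charpoly_baseChange Ω
  -- separability / squarefreeness
  have hsqL : Squarefree (LinearMap.charpoly u) := hmin ▸ hus.minpoly_squarefree
  have hsepL : (LinearMap.charpoly u).Separable := PerfectField.separable_iff_squarefree.mpr hsqL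
  have hsepΩ : (U.charpoly).Separable := by rw [hchU]; exact hsepL.map
  have hsqΩ : Squarefree U.charpoly := hsepΩ.squarefree
  -- U is (finitely) semisimple
  have hUss : U.IsSemisimple :=
    Module.End.isSemisimple_of_squarefree_aeval_eq_zero hsqΩ (LinearMap.aeval_self_charpoly U)
  have hUfs : U.IsFinitelySemisimple := hUss.isFinitelySemisimple
  have hcommUV : Commute U Vv := by
    show U * Vv = Vv * U
    rw [hUdef, hVdef, ← LinearMap.baseChange_mul, ← LinearMap.baseChange_mul, hcomm]
  -- the eigenspaces of U span
  have htop : ⨆ ν : Ω, U.eigenspace ν = ⊤ := by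
    have h1 := Module.End.iSup_maxGenEigenspace_eq_top U
    simpa only [hUfs.maxGenEigenspace_eq_eigenspace] using h1
  -- the set of roots of the characteristic polynomial of U
  set R : Finset Ω := U.charpoly.roots.toFinset with hRdef
  have hchU0 : U.charpoly ≠ 0 := (LinearMap.charpoly_monic U).ne_zero
  have hmemR : ∀ ν : Ω, ν ∈ R ↔ U.charpoly.IsRoot ν := by
    intro ν
    rw [hRdef, Multiset.mem_toFinset, Polynomial.mem_roots hchU0]
  have hEig : ∀ ν : Ω, U.HasEigenvalue ν ↔ ν ∈ R := by
    intro ν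
    constructor
    · intro h
      rw [hmemR]
      exact (Module.End.isRoot_of_hasEigenvalue h).dvd
        (minpoly.dvd Ω U (LinearMap.aeval_self_charpoly U))
    · intro h
      exact hasEigenvalue_of_isRoot_charpoly' U ν ((hmemR ν).mp h)
  -- cardinality of R
  have hdim : Module.finrank Ω (Ω ⊗[L] V) = Module.finrank L V := Module.finrank_baseChange
  have hcardR : R.card = Module.finrank Ω (Ω ⊗[L] V) := by
    rw [hRdef, Multiset.toFinset_card_of_nodup (Polynomial.nodup_roots hsepΩ),
      (Polynomial.splits_iff_card_roots).mp (IsAlgClosed.splits _),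
      LinearMap.charpoly_natDegree]
  -- internal direct sum of eigenspaces indexed by R
  set ι := {x : Ω // x ∈ R} with hιdef
  have hsupR : ⨆ ν : ι, U.eigenspace (ν : Ω) = ⊤ := by
    refine le_antisymm le_top ?_
    rw [← htop]
    refine iSup_le fun ν => ?_
    by_cases hν : ν ∈ R
    · exact le_iSup_of_le ⟨ν, hν⟩ le_rfl
    · have hbot : U.eigenspace ν = ⊥ := by
        by_contra hbot
        exact hν ((hEig ν).mp (Module.End.hasEigenvalue_iff.mpr hbot))
      rw [hbot]
      exact bot_le
  have hind : iSupIndep fun ν : ι => U.eigenspace (ν : Ω) :=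
    (Module.End.eigenspaces_iSupIndep U).comp Subtype.coe_injective
  have hint : DirectSum.IsInternal fun ν : ι => U.eigenspace (ν : Ω) :=
    (DirectSum.isInternal_submodule_iff_iSupIndep_and_iSup_eq_top _).mpr ⟨hind, hsupR⟩
  -- each eigenspace has dimension 1
  have hnbot : ∀ ν : ι, U.eigenspace (ν : Ω) ≠ ⊥ := fun ν => (hEig ν).mpr ν.2
  have hrank1 : ∀ ν : ι, Module.finrank Ω (U.eigenspace (ν : Ω)) = 1 := by
    haveI : ∀ ν : ι, Module.Free Ω (U.eigenspace (ν : Ω)) := fun ν => Module.Free.of_divisionRing Ω (U.eigenspace (ν : Ω))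
    have hb0 := hint.collectedBasis fun ν : ι => Module.finBasis Ω (U.eigenspace (ν : Ω))
    have hsum : ∑ ν : ι, Module.finrank Ω (U.eigenspace (ν : Ω)) = Fintype.card ι := by
      have h1 := Module.finrank_eq_card_basis hb0
      rw [Fintype.card_sigma] at h1
      simp only [Fintype.card_fin] at h1
      rw [← h1, Fintype.card_coe, hcardR]
    have hge : ∀ ν : ι, 1 ≤ Module.finrank Ω (U.eigenspace (ν : Ω)) := by
      intro ν
      have : Nontrivial (U.eigenspace (ν : Ω)) :=
        Submodule.nontrivial_iff_ne_bot.mpr (hnbot ν)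
      exact Module.finrank_pos (R := Ω) (M := U.eigenspace (ν : Ω))
    intro ν
    by_contra hne
    have h2 : 1 < Module.finrank Ω (U.eigenspace (ν : Ω)) := lt_of_le_of_ne (hge ν) (Ne.symm hne)
    have : ∑ _ν : ι, 1 < ∑ ν : ι, Module.finrank Ω (U.eigenspace (ν : Ω)) :=
      Finset.sum_lt_sum (fun i _ => hge i) ⟨ν, Finset.mem_univ ν, h2⟩
    simp only [Finset.sum_const, Finset.card_univ, smul_eq_mul, mul_one] at this
    omega
  -- choose eigenvectors
  have hpick : ∀ ν : ι, ∃ e : Ω ⊗[L] V, e ≠ 0 ∧ U.eigenspace (ν : Ω) = Submodule.span Ω {e} := by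
    intro ν
    obtain ⟨e, he, he0⟩ := (Submodule.ne_bot_iff _).mp (hnbot ν)
    refine ⟨e, he0, ?_⟩
    have hle : Submodule.span Ω {e} ≤ U.eigenspace (ν : Ω) :=
      Submodule.span_le.mpr (Set.singleton_subset_iff.mpr he)
    refine (Submodule.eq_of_le_of_finrank_le hle ?_).symm
    rw [finrank_span_singleton he0]
    exact le_of_eq (hrank1 ν)
  choose e he0 hspan using hpick
  have hemem : ∀ ν : ι, e ν ∈ U.eigenspace (ν : Ω) := fun ν =>
    (hspan ν).symm ▸ Submodule.mem_span_singleton_self (e ν)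
  have hUe : ∀ ν : ι, U (e ν) = (ν : Ω) • e ν := fun ν =>
    Module.End.mem_eigenspace_iff.mp (hemem ν)
  -- v preserves the eigenspaces of U, giving eigenvalues μf
  have hVe' : ∀ ν : ι, Vv (e ν) ∈ U.eigenspace (ν : Ω) := by
    intro ν
    exact Module.End.mapsTo_genEigenspace_of_comm hcommUV (ν : Ω) 1 (hemem ν)
  have hVe'' : ∀ ν : ι, ∃ c : Ω, Vv (e ν) = c • e ν := by
    intro ν
    have := hVe' ν
    rw [hspan ν] at this
    obtain ⟨c, hc⟩ := Submodule.mem_span_singleton.mp this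
    exact ⟨c, hc.symm⟩
  choose μf hμf using hVe''
  -- the eigenvectors form a basis
  have hli : LinearIndependent Ω e :=
    Module.End.eigenvectors_linearIndependent' U (fun ν : ι => (ν : Ω)) Subtype.coe_injective e
      (fun ν => ⟨hemem ν, he0 ν⟩)
  have hsp : ⊤ ≤ Submodule.span Ω (Set.range e) := by
    rw [← hsupR]
    refine iSup_le fun ν => ?_
    rw [hspan ν]
    exact Submodule.span_mono (Set.singleton_subset_iff.mpr (Set.mem_range_self ν))
  let b : Module.Basis ι Ω (Ω ⊗[L] V) := Module.Basis.mk hli hsp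
  have hb : ∀ ν : ι, b ν = e ν := fun ν => Module.Basis.mk_apply hli hsp ν
  -- trace computation
  have htrace : ∀ i : ℕ, ∑ ν : ι, (ν : Ω) ^ i * μf ν ∈ Set.range (algebraMap K Ω) := by
    intro i
    have hdiag : ∀ ν : ι, (U ^ i * Vv) (b ν) = ((ν : Ω) ^ i * μf ν) • b ν := by
      intro ν
      rw [hb, Module.End.mul_apply, hμf, _root_.map_smul]
      have hpow : (U ^ i) (e ν) = (ν : Ω) ^ i • e ν := by
        induction i with
        | zero => simp
        | succ n ih =>
          rw [pow_succ, Module.End.mul_apply, hUe, _root_.map_smul, ih, smul_smul, pow_succ, mul_comm]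
      rw [hpow, smul_smul, mul_comm]
    have h1 : LinearMap.trace Ω (Ω ⊗[L] V) (U ^ i * Vv) = ∑ ν : ι, (ν : Ω) ^ i * μf ν :=
      trace_diag' b _ _ hdiag
    have h2 : U ^ i * Vv = LinearMap.baseChange Ω (u ^ i * v) := by
      rw [hUdef, hVdef, LinearMap.baseChange_mul, LinearMap.baseChange_pow]
    have h3 : LinearMap.trace Ω (Ω ⊗[L] V) (U ^ i * Vv)
        = algebraMap L Ω (LinearMap.trace L V (u ^ i * v)) := by
      rw [h2, LinearMap.trace_baseChange]
    obtain ⟨c, hc⟩ := htr i 1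
    rw [pow_one] at hc
    refine ⟨c, ?_⟩
    rw [IsScalarTower.algebraMap_apply K L Ω, hc, ← h3, h1]
  -- membership of eigenvalues of u in F
  have hνF : ∀ ν : ι, (ν : Ω) ∈ F := by
    intro ν
    refine Subfield.subset_closure (Or.inr ?_)
    have : U.charpoly.IsRoot (ν : Ω) := (hmemR ν).mp ν.2
    rw [hchU] at this
    simpa only [Set.mem_setOf_eq, aeval_def, ← eval_map, IsRoot.def] using this
  have hKF : ∀ c : K, algebraMap K Ω c ∈ F := fun c =>
    Subfield.subset_closure (Or.inl ⟨c, rfl⟩)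
  -- Vandermonde argument: each μf ν lies in F
  have hμfF : ∀ ν : ι, μf ν ∈ F := by
    set d := Module.finrank Ω (Ω ⊗[L] V) with hddef
    have hcardι : Fintype.card ι = d := (Fintype.card_coe R).trans hcardR
    let eqv : ι ≃ Fin d := Fintype.equivFinOfCardEq hcardι
    set g : Fin d → Ω := fun k => ((eqv.symm k : ι) : Ω) with hgdef
    have hginj : Function.Injective g := Subtype.coe_injective.comp eqv.symm.injective
    set T : ℕ → Ω := fun i => ∑ ν : ι, (ν : Ω) ^ i * μf ν with hTdef
    have hTF : ∀ i, T i ∈ F := by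
      intro i
      obtain ⟨c, hc⟩ := htrace i
      have hTi : T i = ∑ ν : ι, (ν : Ω) ^ i * μf ν := rfl
      rw [hTi, ← hc]
      exact hKF c
    set A' : Matrix (Fin d) (Fin d) F :=
      Matrix.of fun i k : Fin d => (⟨g k, hνF _⟩ : F) ^ (i : ℕ) with hA'def
    set coeF : F →+* Ω := F.subtype with hcoeF
    have hAmap : A'.map coeF = (Matrix.vandermonde g)ᵀ := by
      ext i k
      simp [hA'def, Matrix.vandermonde, Matrix.transpose_apply, Matrix.map_apply, hcoeF]
    have hdetΩ : ((Matrix.vandermonde g)ᵀ).det ≠ 0 := by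
      rw [Matrix.det_transpose]
      exact Matrix.det_vandermonde_ne_zero_iff.mpr hginj
    have hdetA' : A'.det ≠ 0 := by
      intro h
      apply hdetΩ
      rw [← hAmap, ← RingHom.mapMatrix_apply, ← RingHom.map_det, h, map_zero]
    have hUnit : IsUnit A'.det := isUnit_iff_ne_zero.mpr hdetA'
    set t' : Fin d → F := fun i => ⟨T i, hTF i⟩ with ht'def
    set y : Fin d → F := A'⁻¹.mulVec t' with hydef
    have hAy : A'.mulVec y = t' := by
      rw [hydef, Matrix.mulVec_mulVec, Matrix.mul_nonsing_inv _ hUnit, Matrix.one_mulVec]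
    set x : Fin d → Ω := fun k => μf (eqv.symm k) with hxdef
    have hmapVec : (A'.map coeF).mulVec (fun k => coeF (y k)) = fun i => coeF (t' i) := by
      funext i
      have h0 : coeF (A'.mulVec y i) = coeF (t' i) := congrArg coeF (congrFun hAy i)
      rw [Matrix.mulVec, dotProduct] at h0 ⊢
      rw [← h0, map_sum coeF (fun k => A' i k * y k) Finset.univ]
      refine Finset.sum_congr rfl fun k _ => ?_
      rw [Matrix.map_apply, _root_.map_mul]
    have hx : (A'.map coeF).mulVec x = fun i => coeF (t' i) := by
      funext i
      rw [Matrix.mulVec, dotProduct]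
      have hcoet : coeF (t' i) = T (i : ℕ) := rfl
      have hTi : T (i : ℕ) = ∑ ν : ι, (ν : Ω) ^ (i : ℕ) * μf ν := rfl
      rw [hcoet, hTi]
      rw [← Equiv.sum_comp eqv.symm (fun ν : ι => (ν : Ω) ^ (i : ℕ) * μf ν)]
      refine Finset.sum_congr rfl fun k _ => ?_
      simp [hA'def, Matrix.map_apply, hxdef, hgdef, hcoeF]
    have hUnitΩ : IsUnit (A'.map coeF).det := by
      rw [hAmap]
      exact isUnit_iff_ne_zero.mpr hdetΩ
    have hinj : Function.Injective ((A'.map coeF).mulVec) := by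
      intro a b' hab
      have := congrArg (fun z => ((A'.map coeF)⁻¹).mulVec z) hab
      simpa only [Matrix.mulVec_mulVec, Matrix.nonsing_inv_mul _ hUnitΩ,
        Matrix.one_mulVec] using this
    have hxy : x = fun k => coeF (y k) := hinj (hx.trans hmapVec.symm)
    intro ν
    have : μf ν = x (eqv ν) := by rw [hxdef]; simp
    rw [this, hxy]
    exact (y (eqv ν)).2
  -- the characteristic polynomial of v factors through the μf
  have hchVprod : Vv.charpoly = ∏ ν : ι, (X - C (μf ν)) := by
    refine charpoly_diag_basis' b Vv (fun ν => μf ν) fun ν => ?_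
    rw [hb]
    exact hμf ν
  -- conclude
  have hroot : ((LinearMap.charpoly v).map (algebraMap L Ω)).eval μ = 0 := by
    rwa [eval_map, ← aeval_def]
  rw [← hchV, hchVprod, eval_prod] at hroot
  obtain ⟨ν, -, hν⟩ := Finset.prod_eq_zero_iff.mp hroot
  rw [eval_sub, eval_X, eval_C, sub_eq_zero] at hν
  rw [hν]
  exact hμfF ν
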